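/- Let n, N ≥ 1, let λ_1,…,λ_n > 0 with Σ_k λ_k = 1, let ρ := diag(λ_1,…,λ_n), let A_1,…,A_N be Hermitian n×n complex matrices, and let m : (0,∞)×(0,∞) → ℝ satisfy 0 < m(x,y) ≤ (x+y)/2 for all x,y > 0. Then det G(m) ≤ det Cov, i.e. the generalized covariance determinant det{Cov_ρ(A_h,A_j)} dominates the determinant of the quantum-Fisher-information Gram matrix det{(f(0)/2)⟨i[ρ,A_h], i[ρ,A_j]⟩_{ρ,f}}. -/

import Mathlib

open Matrix
lemma det_one_add_of_posSemidef {N : ℕ} {M : Matrix (Fin N) (Fin N) ℝ}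
    (hM : M.PosSemidef) : 1 ≤ (1 + M).det := by
  have h1 := hM.1
  have hU := (Matrix.mem_unitaryGroup_iff).mp h1.eigenvectorUnitary.2
  have key : 1 + M = (h1.eigenvectorUnitary : Matrix (Fin N) (Fin N) ℝ) *
      (1 + diagonal (RCLike.ofReal ∘ h1.eigenvalues)) *
      star (h1.eigenvectorUnitary : Matrix (Fin N) (Fin N) ℝ) := by
    have hsp := h1.spectral_theorem
    rw [Unitary.conjStarAlgAut_apply] at hsp
    rw [mul_add, add_mul, mul_one, hU, ← hsp]
  rw [key, det_mul_right_comm, hU, one_mul]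
  have : (1 : Matrix (Fin N) (Fin N) ℝ) + diagonal (RCLike.ofReal ∘ h1.eigenvalues)
      = diagonal (fun i => 1 + h1.eigenvalues i) := by
    rw [← diagonal_one, diagonal_add]
    congr 1
  rw [this, det_diagonal]
  calc (1:ℝ) = ∏ _i : Fin N, (1:ℝ) := by simp
    _ ≤ ∏ i, (1 + h1.eigenvalues i) := Finset.prod_le_prod (by simp)
        (fun i _ => by linarith [hM.eigenvalues_nonneg i])

lemma det_nonneg_of_posSemidef {N : ℕ} {M : Matrix (Fin N) (Fin N) ℝ}
    (hM : M.PosSemidef) : 0 ≤ M.det := by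
  rw [hM.1.det_eq_prod_eigenvalues]
  exact Finset.prod_nonneg fun i _ => by
    simpa using hM.eigenvalues_nonneg i

open scoped MatrixOrder in
lemma det_le_det_of_posSemidef {N : ℕ} {G C : Matrix (Fin N) (Fin N) ℝ}
    (hG : G.PosSemidef) (hGC : (C - G).PosSemidef) : G.det ≤ C.det := by
  have hC : C.PosSemidef := by simpa using hG.add hGC
  by_cases hdet : G.det = 0
  · rw [hdet]; exact det_nonneg_of_posSemidef hC
  · set S := CFC.sqrt G with hSdef
    have hS : S.PosSemidef := (CFC.sqrt_nonneg G).posSemidef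
    have hSS : S * S = G := CFC.sqrt_mul_sqrt_self G hG.nonneg
    have hdetS : IsUnit S.det := by
      rw [isUnit_iff_ne_zero]
      intro h0
      apply hdet
      rw [← hSS, det_mul, h0, mul_zero]
    have hSi : S⁻¹.IsHermitian := hS.1.inv
    set M := S⁻¹ * (C - G) * S⁻¹ with hMdef
    have hM : M.PosSemidef := by
      have := hGC.mul_mul_conjTranspose_same S⁻¹
      rwa [hSi.eq] at this
    have key : C = S * (1 + M) * S := by
      rw [hMdef, mul_add, mul_one, add_mul]
      rw [show S * (S⁻¹ * (C - G) * S⁻¹) * S = (S * S⁻¹) * (C - G) * (S⁻¹ * S) by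
        simp only [Matrix.mul_assoc]]
      rw [mul_nonsing_inv _ hdetS, nonsing_inv_mul _ hdetS, one_mul, mul_one, hSS]
      abel
    have hGdet : 0 ≤ G.det := det_nonneg_of_posSemidef hG
    have h1M : 1 ≤ (1 + M).det := det_one_add_of_posSemidef hM
    calc G.det = G.det * 1 := (mul_one _).symm
      _ ≤ G.det * (1 + M).det := by
          exact mul_le_mul_of_nonneg_left h1M hGdet
      _ = C.det := by
          rw [key, det_mul, det_mul, ← hSS, det_mul]; ring

lemma rank1_posSemidef {N : ℕ} (v : Fin N → ℂ) :
    PosSemidef (Matrix.of fun h j => (v h * (starRingEnd ℂ) (v j)).re) := by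
  rw [posSemidef_iff_dotProduct_mulVec]
  constructor
  · ext h j
    simp only [conjTranspose_apply, of_apply, star_trivial]
    have : v j * (starRingEnd ℂ) (v h) = (starRingEnd ℂ) (v h * (starRingEnd ℂ) (v j)) := by
      rw [_root_.map_mul, Complex.conj_conj]; ring
    rw [this, Complex.conj_re]
  · intro c
    have key : star c ⬝ᵥ (Matrix.of fun h j => (v h * (starRingEnd ℂ) (v j)).re) *ᵥ c
        = ((∑ h, (c h : ℂ) * v h) * (starRingEnd ℂ) (∑ j, (c j : ℂ) * v j)).re := by
      rw [map_sum, Finset.sum_mul_sum, Complex.re_sum]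
      simp only [dotProduct, mulVec, dotProduct, of_apply, Pi.star_apply, star_trivial,
        Complex.re_sum, Finset.mul_sum]
      refine Finset.sum_congr rfl fun h _ => Finset.sum_congr rfl fun j _ => ?_
      rw [_root_.map_mul, Complex.conj_ofReal]
      have : (c h : ℂ) * v h * ((c j : ℂ) * (starRingEnd ℂ) (v j))
          = ((c h * c j : ℝ) : ℂ) * (v h * (starRingEnd ℂ) (v j)) := by
        push_cast; ring
      rw [this, Complex.re_ofReal_mul]; ring
    rw [key, Complex.mul_conj]
    simpa using Complex.normSq_nonneg _

lemma posSemidef_smul' {N : ℕ} {P : Matrix (Fin N) (Fin N) ℝ} (hP : P.PosSemidef)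
    {w : ℝ} (hw : 0 ≤ w) : (w • P).PosSemidef := by
  refine posSemidef_iff_dotProduct_mulVec.mpr ⟨by rw [IsHermitian, conjTranspose_smul, star_trivial, hP.1.eq], fun x => ?_⟩
  rw [smul_mulVec, dotProduct_smul, smul_eq_mul]
  exact mul_nonneg hw (hP.dotProduct_mulVec_nonneg x)

lemma posSemidef_sum' {N : ℕ} {ι : Type*} (s : Finset ι) (f : ι → Matrix (Fin N) (Fin N) ℝ)
    (hf : ∀ i ∈ s, (f i).PosSemidef) : (∑ i ∈ s, f i).PosSemidef :=
  Finset.sum_induction f _ (fun _ _ ha hb => ha.add hb) (Matrix.PosSemidef.zero) hf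

lemma weighted_gram_posSemidef {n N : ℕ} (w : Fin n → Fin n → ℝ) (hw : ∀ k l, 0 ≤ w k l)
    (x : Fin N → Matrix (Fin n) (Fin n) ℂ) :
    PosSemidef (Matrix.of fun h j => ∑ k, ∑ l,
      w k l * (x h k l * (starRingEnd ℂ) (x j k l)).re) := by
  have hrw : (Matrix.of fun h j => ∑ k, ∑ l,
      w k l * (x h k l * (starRingEnd ℂ) (x j k l)).re)
      = ∑ k : Fin n, ∑ l : Fin n,
        w k l • Matrix.of (fun h j => ((fun h' => x h' k l) h *
          (starRingEnd ℂ) ((fun h' => x h' k l) j)).re) := by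
    ext h j
    simp [Matrix.sum_apply]
  rw [hrw]
  exact posSemidef_sum' _ _ fun k _ => posSemidef_sum' _ _ fun l _ =>
    posSemidef_smul' (rank1_posSemidef (fun h => x h k l)) (hw k l)

/-- For a faithful diagonal density matrix ρ = diag(λ), Hermitian matrices
`A_1, …, A_N`, and any mean-like function `m` with `0 < m(x,y) ≤ (x+y)/2` on positives,
the determinant of the quantum-Fisher-information Gram matrix `G(m)` is dominated by the
determinant of the covariance matrix. -/
theorem det_fisher_le_det_cov
    (n N : ℕ) (hn : 1 ≤ n) (hN : 1 ≤ N)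
    (lam : Fin n → ℝ) (hpos : ∀ k, 0 < lam k) (hsum : ∑ k, lam k = 1)
    (A : Fin N → Matrix (Fin n) (Fin n) ℂ) (hA : ∀ h, (A h).IsHermitian)
    (m : ℝ → ℝ → ℝ)
    (hm : ∀ x y : ℝ, 0 < x → 0 < y → 0 < m x y ∧ m x y ≤ (x + y) / 2)
    (ρ : Matrix (Fin n) (Fin n) ℂ)
    (hρ : ρ = Matrix.diagonal fun k => (lam k : ℂ))
    (A₀ : Fin N → Matrix (Fin n) (Fin n) ℂ)
    (hA₀ : ∀ h, A₀ h = A h - (Matrix.trace (ρ * A h)) • (1 : Matrix (Fin n) (Fin n) ℂ))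
    (Cov : Matrix (Fin N) (Fin N) ℝ)
    (hCov : ∀ h j, Cov h j = (Matrix.trace (ρ * A₀ h * A₀ j)).re)
    (G : Matrix (Fin N) (Fin N) ℝ)
    (hG : ∀ h j, G h j = Cov h j -
      ∑ k, ∑ l, m (lam k) (lam l) * (A₀ h k l * (starRingEnd ℂ) (A₀ j k l)).re) :
    G.det ≤ Cov.det := by
  subst hρ
  -- A₀ is Hermitian
  have hA₀herm : ∀ h, (A₀ h).IsHermitian := by
    intro h
    have htr : star (Matrix.trace (Matrix.diagonal (fun k => (lam k : ℂ)) * A h))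
        = Matrix.trace (Matrix.diagonal (fun k => (lam k : ℂ)) * A h) := by
      simp only [Matrix.trace, Matrix.diag, diagonal_mul, star_sum]
      refine Finset.sum_congr rfl fun k _ => ?_
      have hAkk : star (A h k k) = A h k k := by
        have := congrFun (congrFun (hA h) k) k
        simpa [conjTranspose_apply] using this
      rw [star_mul', hAkk, Complex.star_def, Complex.conj_ofReal, mul_comm]
    rw [hA₀ h, IsHermitian, conjTranspose_sub, conjTranspose_smul, conjTranspose_one,
      (hA h).eq, htr]
  -- entrywise conjugate symmetry
  have hconj : ∀ h k l, (starRingEnd ℂ) (A₀ h k l) = A₀ h l k := by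
    intro h k l
    have := congrFun (congrFun (hA₀herm h) l) k
    simpa [conjTranspose_apply] using this
  set r : Fin N → Fin N → Fin n → Fin n → ℝ :=
    fun h j k l => (A₀ h k l * (starRingEnd ℂ) (A₀ j k l)).re with hr
  have rsymm : ∀ h j k l, r h j l k = r h j k l := by
    intro h j k l
    have h1 : A₀ h l k * (starRingEnd ℂ) (A₀ j l k)
        = (starRingEnd ℂ) (A₀ h k l * (starRingEnd ℂ) (A₀ j k l)) := by
      rw [← hconj h k l, ← hconj j k l, _root_.map_mul, Complex.conj_conj]
    simp only [hr]
    rw [h1, Complex.conj_re]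
  -- Cov entries
  have hCovW : ∀ h j, Cov h j = ∑ k, ∑ l, lam k * r h j k l := by
    intro h j
    rw [hCov h j]
    have : Matrix.trace (Matrix.diagonal (fun k => (lam k : ℂ)) * A₀ h * A₀ j)
        = ∑ k, ∑ l, ((lam k : ℂ) * (A₀ h k l * A₀ j l k)) := by
      simp only [Matrix.trace, Matrix.diag]
      refine Finset.sum_congr rfl fun k _ => ?_
      rw [Matrix.mul_apply]
      refine Finset.sum_congr rfl fun l _ => ?_
      rw [Matrix.diagonal_mul, mul_assoc]
    rw [this, Complex.re_sum]
    refine Finset.sum_congr rfl fun k _ => ?_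
    rw [Complex.re_sum]
    refine Finset.sum_congr rfl fun l _ => ?_
    rw [Complex.re_ofReal_mul, hr]
    congr 2
    rw [hconj j k l]
  -- symmetrized Cov
  have hswap : ∀ h j, (∑ k, ∑ l, lam l * r h j k l) = ∑ k, ∑ l, lam k * r h j k l := by
    intro h j
    rw [Finset.sum_comm]
    exact Finset.sum_congr rfl fun k _ => Finset.sum_congr rfl fun l _ => by
      rw [rsymm h j l k]
  have hCovHalf : ∀ h j, Cov h j = ∑ k, ∑ l, ((lam k + lam l) / 2) * r h j k l := by
    intro h j
    have expand : (∑ k, ∑ l, ((lam k + lam l) / 2) * r h j k l)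
        = ((∑ k, ∑ l, lam k * r h j k l) + ∑ k, ∑ l, lam l * r h j k l) / 2 := by
      rw [← Finset.sum_add_distrib, Finset.sum_div]
      refine Finset.sum_congr rfl fun k _ => ?_
      rw [← Finset.sum_add_distrib, Finset.sum_div]
      exact Finset.sum_congr rfl fun l _ => by ring
    rw [expand, hswap h j, hCovW h j]
    ring
  -- G as weighted Gram matrix
  have hGmat : G = Matrix.of fun h j => ∑ k, ∑ l,
      ((lam k + lam l) / 2 - m (lam k) (lam l)) * (A₀ h k l * (starRingEnd ℂ) (A₀ j k l)).re := by
    ext h j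
    rw [Matrix.of_apply, hG h j, hCovHalf h j, ← Finset.sum_sub_distrib]
    refine Finset.sum_congr rfl fun k _ => ?_
    rw [← Finset.sum_sub_distrib]
    exact Finset.sum_congr rfl fun l _ => by rw [hr]; ring
  have hGpsd : G.PosSemidef := by
    rw [hGmat]
    exact weighted_gram_posSemidef _ (fun k l =>
      sub_nonneg.mpr (hm _ _ (hpos k) (hpos l)).2) A₀
  have hDmat : Cov - G = Matrix.of fun h j => ∑ k, ∑ l,
      m (lam k) (lam l) * (A₀ h k l * (starRingEnd ℂ) (A₀ j k l)).re := by
    ext h j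
    rw [Matrix.sub_apply, Matrix.of_apply, hG h j]
    ring
  have hDpsd : (Cov - G).PosSemidef := by
    rw [hDmat]
    exact weighted_gram_posSemidef _ (fun k l =>
      (hm _ _ (hpos k) (hpos l)).1.le) A₀
  exact det_le_det_of_posSemidef hGpsd hDpsd
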